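/- arXiv:1606.06172 — 5 statements merged into one kernel-verified Lean document; each statement's English description precedes it below -/
import Mathlib

section
/- For any n ≥ 1, the set D_n of Dyck words of length 2n and the set D_n^- of bitstrings of length 2n with weight n that have exactly one prefix with more 0s than 1s have the same cardinality. -/
/-- A bitstring is a Dyck word if it has as many 1s (`true`) as 0s (`false`) and
every prefix has at least as many 1s as 0s. -/
def isDyck (x : List Bool) : Prop :=
  x.count true = x.count false ∧
  ∀ k : ℕ, (x.take k).count false ≤ (x.take k).count true

/-- The set `D_n` of Dyck words of length `2n`. -/
def dyckWords (n : ℕ) : Set (List Bool) := {x | x.length = 2 * n ∧ isDyck x}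

/-- The set `D_n^-` of bitstrings of length `2n` with weight `n` having exactly one
prefix with strictly more 0s than 1s. -/
def dyckWordsMinus (n : ℕ) : Set (List Bool) :=
  {x | x.length = 2 * n ∧ x.count true = n ∧
    ((Finset.range (2 * n + 1)).filter
      (fun k => (x.take k).count true < (x.take k).count false)).card = 1}

namespace Stmt2Aux

/-- Height of a bitstring: #true minus #false. -/
def ht (x : List Bool) : ℤ := (x.count true : ℤ) - x.count false

lemma ht_nil : ht ([] : List Bool) = 0 := rfl

lemma ht_append (x y : List Bool) : ht (x ++ y) = ht x + ht y := by
  simp [ht, List.count_append]; ring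

lemma ht_true : ht [true] = 1 := by simp [ht]

lemma ht_false : ht [false] = -1 := by simp [ht]

lemma count_true_add_count_false (x : List Bool) :
    x.count true + x.count false = x.length := by
  induction x with
  | nil => rfl
  | cons c t ih => cases c <;> simp [List.count_cons] <;> omega

lemma ht_take_append (x y : List Bool) (k : ℕ) :
    ht ((x ++ y).take k) = ht (x.take k) + ht (y.take (k - x.length)) := by
  rw [List.take_append, ht_append]

lemma ht_take_singleton (c : Bool) (k : ℕ) :
    ht ([c].take k) = if k = 0 then 0 else ht [c] := by
  cases k with
  | zero => simp [ht]
  | succ m => rw [if_neg (Nat.succ_ne_zero m), List.take_of_length_le (by simp)]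

lemma take_succ_get (x : List Bool) (k : ℕ) (hk : k < x.length) :
    x.take (k+1) = x.take k ++ [x[k]] := by
  rw [List.take_succ, List.getElem?_eq_getElem hk]; rfl

/-- The set of "nonnegative balanced" bitstrings (Dyck words of arbitrary length). -/
def P : Set (List Bool) := {x | ht x = 0 ∧ ∀ k, 0 ≤ ht (x.take k)}

lemma P_two_mul_count {x : List Bool} (hx : x ∈ P) : 2 * x.count true = x.length := by
  have h1 := hx.1
  have h2 := count_true_add_count_false x
  simp only [ht, sub_eq_zero, Nat.cast_inj] at h1
  omega

/-- the index set -/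
def S (n : ℕ) : Set (List Bool × List Bool) :=
  {p | p.1 ∈ P ∧ p.2 ∈ P ∧ p.1.length + p.2.length = 2 * n - 2}

def Phi (p : List Bool × List Bool) : List Bool := true :: (p.1 ++ false :: p.2)

def Psi (p : List Bool × List Bool) : List Bool := p.1 ++ false :: true :: p.2

lemma phi_eq (a b : List Bool) : Phi (a, b) = [true] ++ (a ++ ([false] ++ b)) := rfl

lemma psi_eq (a b : List Bool) : Psi (a, b) = a ++ ([false] ++ ([true] ++ b)) := rfl

lemma ht_phi_take (a b : List Bool) (k : ℕ) :
    ht ((Phi (a, b)).take k)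
      = ht ([true].take k) + ht (a.take (k-1)) + ht ([false].take (k-1-a.length))
        + ht (b.take (k-2-a.length)) := by
  rw [phi_eq, ht_take_append, ht_take_append, ht_take_append]
  have h1 : k - [true].length = k - 1 := by simp
  have h2 : k - 1 - a.length - [false].length = k - 2 - a.length := by simp; omega
  rw [h1, h2]
  ring

lemma ht_psi_take (a b : List Bool) (k : ℕ) :
    ht ((Psi (a, b)).take k)
      = ht (a.take k) + ht ([false].take (k-a.length)) + ht ([true].take (k-a.length-1))
        + ht (b.take (k-a.length-2)) := by
  rw [psi_eq, ht_take_append, ht_take_append, ht_take_append]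
  have h1 : k - a.length - [false].length = k - a.length - 1 := by simp
  have h2 : k - a.length - 1 - [true].length = k - a.length - 2 := by simp; omega
  rw [h1, h2]
  ring

lemma P_take_full {x : List Bool} (hx : x ∈ P) {k : ℕ} (h : x.length ≤ k) :
    ht (x.take k) = 0 := by rw [List.take_of_length_le h]; exact hx.1

/-- first return of Phi (a,b) is at |a|+2 : heights before are positive. -/
lemma phi_ht_pos {a b : List Bool} (ha : a ∈ P) (m : ℕ) (h1 : 1 ≤ m)
    (h2 : m < a.length + 2) : 0 < ht ((Phi (a, b)).take m) := by
  rw [ht_phi_take]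
  have e1 : ht ([true].take m) = 1 := by rw [ht_take_singleton]; simp [ht_true]; omega
  have e2 : m - 1 - a.length = 0 := by omega
  have e3 : m - 2 - a.length = 0 := by omega
  rw [e1, e2, e3]
  simp only [List.take_zero, ht_nil]
  have := ha.2 (m - 1)
  omega

lemma phi_ht_firstreturn {a b : List Bool} (ha : a ∈ P) :
    ht ((Phi (a, b)).take (a.length + 2)) = 0 := by
  rw [ht_phi_take]
  have e1 : ht ([true].take (a.length + 2)) = 1 := by
    rw [ht_take_singleton]; simp [ht_true]
  have e2 : a.length + 2 - 1 - a.length = 1 := by omega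
  have e3 : a.length + 2 - 2 - a.length = 0 := by omega
  rw [e1, e2, e3, P_take_full ha (by omega)]
  simp [ht_false, ht_nil]

/-- the unique bad prefix of Psi (a,b) is at |a|+1 -/
lemma psi_bad_iff {a b : List Bool} (ha : a ∈ P) (hb : b ∈ P) (j : ℕ) :
    ht ((Psi (a, b)).take j) < 0 ↔ j = a.length + 1 := by
  rw [ht_psi_take]
  rcases lt_trichotomy j (a.length + 1) with h | h | h
  · -- j ≤ a.length
    have e1 : j - a.length = 0 := by omega
    have e2 : j - a.length - 1 = 0 := by omega
    have e3 : j - a.length - 2 = 0 := by omega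
    rw [e3, e2, e1]
    simp only [List.take_zero, ht_nil]
    have := ha.2 j
    constructor
    · intro hlt; omega
    · intro hj; omega
  · subst h
    have e1 : a.length + 1 - a.length = 1 := by omega
    have e2 : a.length + 1 - a.length - 1 = 0 := by omega
    rw [e2, e1, P_take_full ha (by omega)]
    simp [ht_false, ht_nil]
  · -- j ≥ a.length + 2
    have e1 : ht ([false].take (j - a.length)) = -1 := by
      rw [ht_take_singleton, ht_false]; simp; omega
    have e2 : ht ([true].take (j - a.length - 1)) = 1 := by
      rw [ht_take_singleton, ht_true]; simp; omega
    rw [e1, e2, P_take_full ha (by omega)]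
    have := hb.2 (j - a.length - 2)
    constructor
    · intro hlt; omega
    · intro hj; omega

/-- bad k in the statement's sense iff ht of take is negative -/
lemma bad_iff (x : List Bool) (k : ℕ) :
    (x.take k).count true < (x.take k).count false ↔ ht (x.take k) < 0 := by
  rw [ht, sub_neg]
  exact_mod_cast Iff.rfl

lemma phi_mem_dyck {n : ℕ} (hn : 1 ≤ n) {p : List Bool × List Bool} (hp : p ∈ S n) :
    Phi p ∈ dyckWords n := by
  obtain ⟨a, b⟩ := p
  obtain ⟨ha, hb, hlen⟩ := hp
  dsimp only at ha hb hlen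
  constructor
  · simp [Phi]; omega
  constructor
  · -- counts equal, i.e. ht = 0
    have : ht (Phi (a, b)) = 0 := by
      rw [phi_eq, ht_append, ht_append, ht_append, ha.1, hb.1, ht_true, ht_false]; ring
    simp only [ht, sub_eq_zero, Nat.cast_inj] at this
    exact this
  · intro k
    rw [← Nat.cast_le (α := ℤ), ← sub_nonneg]
    show (0:ℤ) ≤ ht ((Phi (a,b)).take k)
    rcases Nat.eq_zero_or_pos k with hk | hk
    · subst hk; simp [ht_nil]
    rcases lt_or_ge k (a.length + 2) with h | h
    · exact le_of_lt (phi_ht_pos ha k hk h)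
    · rw [ht_phi_take]
      have e1 : ht ([true].take k) = 1 := by rw [ht_take_singleton]; simp [ht_true]; omega
      have e2 : ht ([false].take (k-1-a.length)) = -1 := by
        rw [ht_take_singleton, ht_false]; simp; omega
      rw [e1, e2, P_take_full ha (by omega)]
      have := hb.2 (k - 2 - a.length)
      omega

lemma psi_mem_minus {n : ℕ} (hn : 1 ≤ n) {p : List Bool × List Bool} (hp : p ∈ S n) :
    Psi p ∈ dyckWordsMinus n := by
  obtain ⟨a, b⟩ := p
  obtain ⟨ha, hb, hlen⟩ := hp
  dsimp only at ha hb hlen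
  have hlen' : (Psi (a,b)).length = 2 * n := by simp [Psi]; omega
  refine ⟨hlen', ?_, ?_⟩
  · -- count true = n
    have h1 := P_two_mul_count ha
    have h2 := P_two_mul_count hb
    have : (Psi (a,b)).count true = a.count true + b.count true + 1 := by
      simp [Psi, List.count_append, List.count_cons]
      omega
    omega
  · rw [Finset.card_eq_one]
    refine ⟨a.length + 1, ?_⟩
    ext j
    simp only [Finset.mem_filter, Finset.mem_range, Finset.mem_singleton, bad_iff,
      psi_bad_iff ha hb]
    constructor
    · rintro ⟨_, h⟩; exact h
    · rintro rfl; exact ⟨by omega, rfl⟩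

lemma phi_inj (n : ℕ) : Set.InjOn Phi (S n) := by
  rintro ⟨a, b⟩ ⟨ha, hb, -⟩ ⟨a', b'⟩ ⟨ha', hb', -⟩ heq
  dsimp only at ha hb ha' hb' heq
  have hlen : a.length = a'.length := by
    by_contra hne
    rcases Nat.lt_or_ge a.length a'.length with h | h
    · have h0 : ht ((Phi (a', b')).take (a.length + 2)) = 0 := by
        rw [← heq]; exact phi_ht_firstreturn ha
      have := phi_ht_pos (b := b') ha' (a.length + 2) (by omega) (by omega)
      omega
    · have h' : a'.length < a.length := by omega
      have h0 : ht ((Phi (a, b)).take (a'.length + 2)) = 0 := by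
        rw [heq]; exact phi_ht_firstreturn ha'
      have := phi_ht_pos (b := b) ha (a'.length + 2) (by omega) (by omega)
      omega
  simp only [Phi, List.cons.injEq, true_and] at heq
  have := List.append_inj heq hlen
  have hb2 : b = b' := by
    have := this.2; simpa using this
  have ha2 : a = a' := this.1
  simp [ha2, hb2]

lemma psi_inj (n : ℕ) : Set.InjOn Psi (S n) := by
  rintro ⟨a, b⟩ ⟨ha, hb, -⟩ ⟨a', b'⟩ ⟨ha', hb', -⟩ heq
  dsimp only at ha hb ha' hb' heq
  have hlen : a.length = a'.length := by
    have h1 : ht ((Psi (a, b)).take (a.length + 1)) < 0 :=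
      (psi_bad_iff ha hb _).2 rfl
    rw [heq, psi_bad_iff ha' hb'] at h1
    omega
  simp only [Psi] at heq
  have := List.append_inj heq hlen
  have hb2 : b = b' := by have := this.2; simpa using this
  simp [this.1, hb2]

/-- every element of dyckWords n is Phi of something in S n. -/
lemma dyck_subset {n : ℕ} (hn : 1 ≤ n) : dyckWords n ⊆ Phi '' S n := by
  rintro x ⟨hxlen, hxc, hxpre⟩
  have hx0 : ht x = 0 := by simp [ht, hxc]
  have hxnn : ∀ k, 0 ≤ ht (x.take k) := by
    intro k
    have := hxpre k
    simp only [ht, sub_nonneg]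
    exact_mod_cast this
  have hne : x ≠ [] := by
    intro h; rw [h] at hxlen; simp at hxlen; omega
  obtain ⟨c, y, rfl⟩ := List.exists_cons_of_ne_nil hne
  have hylen : y.length + 1 = 2 * n := by simpa using hxlen
  have hc : c = true := by
    by_contra hcf
    have hc' : c = false := by cases c <;> simp_all
    subst hc'
    have h1 := hxnn 1
    have e : (false :: y).take 1 = [false] := rfl
    rw [e, ht_false] at h1
    omega
  subst hc
  classical
  have hex : ∃ m, 1 ≤ m ∧ ht ((true :: y).take m) = 0 := by
    refine ⟨2 * n, by omega, ?_⟩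
    rw [List.take_of_length_le (by simp; omega)]
    exact hx0
  obtain ⟨k, ⟨hk1, hk0⟩, hkmin⟩ :
      ∃ k, (1 ≤ k ∧ ht ((true :: y).take k) = 0) ∧
        ∀ m, m < k → ¬(1 ≤ m ∧ ht ((true :: y).take m) = 0) :=
    ⟨Nat.find hex, Nat.find_spec hex, fun m hm => Nat.find_min hex hm⟩
  have hklen : k ≤ 2 * n := by
    by_contra h
    exact hkmin (2 * n) (by omega)
      ⟨by omega, by rw [List.take_of_length_le (by simp; omega)]; exact hx0⟩
  have hk2 : 2 ≤ k := by
    by_contra h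
    have hk1' : k = 1 := by omega
    rw [hk1'] at hk0
    have e : (true :: y).take 1 = [true] := rfl
    rw [e, ht_true] at hk0
    omega
  have hkl : k - 1 < (true :: y).length := by simp; omega
  have hstep : (true :: y).take (k - 1 + 1)
      = (true :: y).take (k - 1) ++ [(true :: y)[k - 1]'(hkl)] :=
    take_succ_get _ _ hkl
  rw [show k - 1 + 1 = k from by omega] at hstep
  have hprev_pos : 0 < ht ((true :: y).take (k - 1)) := by
    have hnn := hxnn (k - 1)
    have hne0 : ht ((true :: y).take (k - 1)) ≠ 0 := by
      intro h0; exact hkmin (k - 1) (by omega) ⟨by omega, h0⟩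
    omega
  have hgetfalse : (true :: y)[k - 1]'(hkl) = false := by
    by_contra hgf
    have hgt : (true :: y)[k - 1]'(hkl) = true := by
      cases h : (true :: y)[k - 1]'(hkl) <;> simp_all
    rw [hstep, ht_append, hgt, ht_true] at hk0
    omega
  have hprev1 : ht ((true :: y).take (k - 1)) = 1 := by
    rw [hstep, ht_append, hgetfalse, ht_false] at hk0
    omega
  have htail : (true :: y).take (k - 1) = true :: y.take (k - 2) := by
    rw [show k - 1 = (k - 2) + 1 from by omega]
    rfl
  have hdrop : (true :: y).drop k = y.drop (k - 1) := by
    have h := List.drop_succ_cons (i := k - 1) (a := true) (l := y)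
    rw [show k - 1 + 1 = k from by omega] at h
    exact h
  refine ⟨(y.take (k - 2), y.drop (k - 1)), ⟨?_, ?_, ?_⟩, ?_⟩
  · show y.take (k - 2) ∈ P
    constructor
    · have h := ht_append [true] (y.take (k - 2))
      rw [ht_true] at h
      rw [htail] at hprev1
      have : ht (true :: y.take (k - 2)) = ht ([true] ++ y.take (k - 2)) := rfl
      rw [this, h] at hprev1
      omega
    · intro m
      have e : (y.take (k - 2)).take m = y.take (min m (k - 2)) := List.take_take
      rw [e]
      have hlt : min m (k - 2) + 1 < k := by omega
      have hstep2 : (true :: y).take (min m (k - 2) + 1) = true :: y.take (min m (k - 2)) := rfl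
      have hnn := hxnn (min m (k - 2) + 1)
      have hnz : ht ((true :: y).take (min m (k - 2) + 1)) ≠ 0 := by
        intro h0; exact hkmin _ hlt ⟨by omega, h0⟩
      rw [hstep2] at hnn hnz
      have he : ht (true :: y.take (min m (k - 2)))
          = 1 + ht (y.take (min m (k - 2))) := by
        have h := ht_append [true] (y.take (min m (k - 2)))
        rw [ht_true] at h
        exact h
      rw [he] at hnn hnz
      omega
  · show y.drop (k - 1) ∈ P
    constructor
    · have h : ht (true :: y) = ht ((true :: y).take k) + ht ((true :: y).drop k) := by
        rw [← ht_append, List.take_append_drop]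
      rw [hx0, hk0, hdrop] at h
      omega
    · intro m
      have e : (y.drop (k - 1)).take m = ((true :: y).drop k).take m := by rw [hdrop]
      rw [e]
      have h : (true :: y).take (k + m)
          = (true :: y).take k ++ ((true :: y).drop k).take m := List.take_add
      have hnn := hxnn (k + m)
      rw [h, ht_append, hk0] at hnn
      omega
  · show (y.take (k - 2)).length + (y.drop (k - 1)).length = 2 * n - 2
    have h1 : (y.take (k - 2)).length = k - 2 := by rw [List.length_take]; omega
    have h2 : (y.drop (k - 1)).length = y.length - (k - 1) := List.length_drop
    omega
  · show true :: (y.take (k - 2) ++ false :: y.drop (k - 1)) = true :: y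
    congr 1
    have hyl2 : k - 2 < y.length := by omega
    have hd : y.drop (k - 2) = y[k - 2]'(hyl2) :: y.drop (k - 1) := by
      have h := List.drop_eq_getElem_cons hyl2
      rw [show k - 2 + 1 = k - 1 from by omega] at h
      exact h
    have hgy : y[k - 2]'(hyl2) = false := by
      have h : (true :: y)[k - 1]'(hkl) = y[k - 2]'(hyl2) := by
        have e : k - 1 = (k - 2) + 1 := by omega
        simp only [e, List.getElem_cons_succ]
      rw [← h]
      exact hgetfalse
    rw [hgy] at hd
    conv_rhs => rw [← List.take_append_drop (k - 2) y, hd]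

/-- every element of dyckWordsMinus n is Psi of something in S n. -/
lemma minus_subset {n : ℕ} (hn : 1 ≤ n) : dyckWordsMinus n ⊆ Psi '' S n := by
  rintro w ⟨hwlen, hwc, hwcard⟩
  have hw0 : ht w = 0 := by
    have := count_true_add_count_false w
    simp [ht]
    omega
  rw [Finset.card_eq_one] at hwcard
  obtain ⟨j, hj⟩ := hwcard
  have hjbad : ht (w.take j) < 0 := by
    have : j ∈ (Finset.range (2*n+1)).filter
        (fun k => (w.take k).count true < (w.take k).count false) := by
      rw [hj]; exact Finset.mem_singleton_self j
    rw [Finset.mem_filter] at this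
    exact (bad_iff w j).1 this.2
  have huniq : ∀ i, ht (w.take i) < 0 → i = j := by
    intro i hi
    have hile : i ≤ 2 * n := by
      by_contra h
      rw [List.take_of_length_le (by omega)] at hi
      omega
    have : i ∈ (Finset.range (2*n+1)).filter
        (fun k => (w.take k).count true < (w.take k).count false) := by
      rw [Finset.mem_filter]
      exact ⟨Finset.mem_range.2 (by omega), (bad_iff w i).2 hi⟩
    rw [hj, Finset.mem_singleton] at this
    exact this
  have hgood : ∀ i, i ≠ j → 0 ≤ ht (w.take i) := by
    intro i hi
    by_contra h
    exact hi (huniq i (by omega))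
  have hj1 : 1 ≤ j := by
    rcases Nat.eq_zero_or_pos j with h | h
    · subst h; simp [ht_nil] at hjbad
    · exact h
  have hjlt : j < 2 * n := by
    rcases Nat.lt_or_ge j (2*n) with h | h
    · exact h
    · exfalso
      rw [List.take_of_length_le (by omega)] at hjbad
      omega
  -- step analysis at j-1 and j
  have hjl : j - 1 < w.length := by omega
  have hstep1 : w.take j = w.take (j-1) ++ [w[j-1]'(hjl)] := by
    have h := take_succ_get w (j-1) hjl
    rw [show j - 1 + 1 = j from by omega] at h
    exact h
  have hprev := hgood (j-1) (by omega)
  have hgf : w[j-1]'(hjl) = false := by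
    by_contra h
    have : w[j-1]'(hjl) = true := by cases hh : w[j-1]'(hjl) <;> simp_all
    rw [hstep1, ht_append, this, ht_true] at hjbad
    omega
  have hjm1 : ht (w.take j) = -1 ∧ ht (w.take (j-1)) = 0 := by
    rw [hstep1, ht_append, hgf, ht_false] at hjbad ⊢
    have hnext := hgood (j+1) (by omega)
    constructor
    · -- need take j ht = -1 : prev - 1 < 0 and prev ≥ 0 so prev = 0
      omega
    · omega
  have hjl2 : j < w.length := by omega
  have hstep2 : w.take (j+1) = w.take j ++ [w[j]] := take_succ_get _ _ hjl2
  have hnext := hgood (j+1) (by omega)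
  have hgt : w[j]'(hjl2) = true := by
    by_contra h
    have : w[j]'(hjl2) = false := by cases hh : w[j]'(hjl2) <;> simp_all
    rw [hstep2, ht_append, this, ht_false, hjm1.1] at hnext
    omega
  have hj1ht : ht (w.take (j+1)) = 0 := by
    rw [hstep2, ht_append, hgt, ht_true, hjm1.1]
    ring
  -- decompose
  refine ⟨(w.take (j-1), w.drop (j+1)), ⟨?_, ?_, ?_⟩, ?_⟩
  · show w.take (j-1) ∈ P
    constructor
    · exact hjm1.2
    · intro m
      rw [List.take_take]
      exact hgood (min m (j-1)) (by omega)
  · show w.drop (j+1) ∈ P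
    constructor
    · have : ht w = ht (w.take (j+1)) + ht (w.drop (j+1)) := by
        rw [← ht_append, List.take_append_drop]
      rw [hw0, hj1ht] at this
      omega
    · intro m
      have : w.take ((j+1) + m) = w.take (j+1) ++ (w.drop (j+1)).take m :=
        List.take_add
      have hnn := hgood ((j+1) + m) (by omega)
      rw [this, ht_append, hj1ht] at hnn
      omega
  · show (w.take (j-1)).length + (w.drop (j+1)).length = 2 * n - 2
    have h1 : (w.take (j-1)).length = j - 1 := by rw [List.length_take]; omega
    have h2 : (w.drop (j+1)).length = w.length - (j+1) := List.length_drop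
    omega
  · -- Psi equals w
    show w.take (j-1) ++ false :: true :: w.drop (j+1) = w
    have hd1 : w.drop (j-1) = w[j-1] :: w.drop j := by
      have := List.drop_eq_getElem_cons hjl
      have e : j - 1 + 1 = j := by omega
      rw [e] at this
      exact this
    have hd2 : w.drop j = w[j] :: w.drop (j+1) := List.drop_eq_getElem_cons hjl2
    conv_rhs => rw [← List.take_append_drop (j-1) w]
    rw [hd1, hd2, hgf, hgt]

lemma dyck_eq_image {n : ℕ} (hn : 1 ≤ n) : dyckWords n = Phi '' (S n) :=
  Set.Subset.antisymm (dyck_subset hn)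
    (by rintro x ⟨p, hp, rfl⟩; exact phi_mem_dyck hn hp)

lemma minus_eq_image {n : ℕ} (hn : 1 ≤ n) : dyckWordsMinus n = Psi '' (S n) :=
  Set.Subset.antisymm (minus_subset hn)
    (by rintro x ⟨p, hp, rfl⟩; exact psi_mem_minus hn hp)

end Stmt2Aux

/-- `D_n` and `D_n^-` have the same cardinality. -/
theorem stmt_2 (n : ℕ) (hn : 1 ≤ n) :
    (dyckWords n).ncard = (dyckWordsMinus n).ncard := by
  rw [Stmt2Aux.dyck_eq_image hn, Stmt2Aux.minus_eq_image hn,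
    Set.ncard_image_of_injOn (Stmt2Aux.phi_inj n),
    Set.ncard_image_of_injOn (Stmt2Aux.psi_inj n)]
end

section
/- Every bitstring x of length 2n (n ≥ 1) with weight n that has exactly one prefix with strictly more 0s than 1s can be written uniquely as x = u01v where u and v are Dyck words. -/
lemma count_true_add_count_false (l : List Bool) :
    l.count true + l.count false = l.length := by
  induction l with
  | nil => simp
  | cons a l ih => cases a <;> simp [List.count_cons] <;> omega

/-- Every bitstring of length `2n` (`n ≥ 1`) with weight `n` having exactly one prefix
with strictly more 0s than 1s can be written uniquely as `u01v` with `u`, `v` Dyck words. -/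
theorem stmt_4 (n : ℕ) (hn : 1 ≤ n) (x : List Bool)
    (hlen : x.length = 2 * n) (hw : x.count true = n)
    (hone : ((Finset.range (2 * n + 1)).filter
      (fun k => (x.take k).count true < (x.take k).count false)).card = 1) :
    ∃! p : List Bool × List Bool,
      isDyck p.1 ∧ isDyck p.2 ∧ x = p.1 ++ [false, true] ++ p.2 := by
  have hcf : x.count false = n := by
    have := count_true_add_count_false x
    omega
  obtain ⟨m, hm⟩ := Finset.card_eq_one.mp hone
  have hmem : ∀ k : ℕ, k ≤ 2 * n →
      ((x.take k).count true < (x.take k).count false ↔ k = m) := by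
    intro k hk
    constructor
    · intro h
      have : k ∈ (Finset.range (2 * n + 1)).filter
          (fun k => (x.take k).count true < (x.take k).count false) := by
        simp [Finset.mem_filter, Finset.mem_range]; exact ⟨by omega, h⟩
      rw [hm] at this
      simpa using this
    · intro h
      have : m ∈ (Finset.range (2 * n + 1)).filter
          (fun k => (x.take k).count true < (x.take k).count false) := by
        rw [hm]; simp
      subst h
      exact (Finset.mem_filter.mp this).2
  have hPm : (x.take m).count true < (x.take m).count false ∧ m ≤ 2 * n := by
    have : m ∈ (Finset.range (2 * n + 1)).filter
        (fun k => (x.take k).count true < (x.take k).count false) := by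
      rw [hm]; simp
    have h := Finset.mem_filter.mp this
    exact ⟨h.2, by have := Finset.mem_range.mp h.1; omega⟩
  have hge : ∀ k : ℕ, k ≠ m → (x.take k).count false ≤ (x.take k).count true := by
    intro k hk
    by_cases hk2 : k ≤ 2 * n
    · by_contra h
      exact hk ((hmem k hk2).mp (by omega))
    · rw [List.take_of_length_le (by omega)]
      omega
  have hm0 : m ≠ 0 := by
    intro h
    have := hPm.1
    rw [h] at this
    simp at this
  have hmlt : m < 2 * n := by
    rcases lt_or_eq_of_le hPm.2 with h | h
    · exact h
    · exfalso
      have := hPm.1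
      rw [h, List.take_of_length_le (by omega)] at this
      omega
  -- take m and take (m+1) expansions
  have hmlen1 : m - 1 < x.length := by omega
  have hmlen2 : m < x.length := by omega
  have e1 : x.take m = x.take (m - 1) ++ [x[m - 1]] := by
    conv_lhs => rw [show m = (m - 1) + 1 by omega]
    rw [List.take_succ, List.getElem?_eq_getElem hmlen1]
    rfl
  have e2 : x.take (m + 1) = x.take m ++ [x[m]] := by
    rw [List.take_succ, List.getElem?_eq_getElem hmlen2]
    rfl
  have g1 := hge (m - 1) (by omega)
  have key1 : x[m - 1] = false ∧
      (x.take (m - 1)).count true = (x.take (m - 1)).count false := by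
    have g2 := hPm.1
    rw [e1] at g2
    cases h : x[m - 1]
    · rw [h] at g2
      simp [List.count_append] at g2
      exact ⟨rfl, by omega⟩
    · rw [h] at g2
      simp [List.count_append] at g2
      omega
  have hfm : (x.take m).count false = (x.take m).count true + 1 := by
    rw [e1, key1.1]
    simp [List.count_append]
    omega
  have g3 := hge (m + 1) (by omega)
  have key2 : x[m] = true ∧
      (x.take (m + 1)).count true = (x.take (m + 1)).count false := by
    rw [e2] at g3
    cases h : x[m]
    · exfalso
      rw [h] at g3
      simp [List.count_append] at g3
      omega
    · rw [h] at g3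
      rw [e2, h]
      simp [List.count_append] at g3 ⊢
      omega
  -- decomposition
  have hdec : x = x.take (m - 1) ++ [false, true] ++ x.drop (m + 1) := by
    conv_lhs => rw [← List.take_append_drop (m - 1) x]
    rw [List.drop_eq_getElem_cons hmlen1, show m - 1 + 1 = m by omega,
      List.drop_eq_getElem_cons hmlen2, key1.1, key2.1]
    simp
  refine ⟨(x.take (m - 1), x.drop (m + 1)), ⟨⟨key1.2, ?_⟩, ⟨?_, ?_⟩, hdec⟩, ?_⟩
  · -- prefixes of u
    intro k
    dsimp only
    rw [List.take_take]
    exact hge _ (by have := min_le_right k (m - 1); omega)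
  · -- counts of v
    dsimp only
    have hx2 := (List.take_append_drop (m + 1) x).symm
    have ht := congrArg (List.count true) hx2
    have hf := congrArg (List.count false) hx2
    rw [List.count_append] at ht hf
    have := key2.2
    omega
  · -- prefixes of v
    intro k
    dsimp only
    have g := hge (m + 1 + k) (by omega)
    rw [List.take_add, List.count_append, List.count_append] at g
    have := key2.2
    omega
  · -- uniqueness
    rintro ⟨a, b⟩ ⟨hda, hdb, hxeq⟩
    dsimp only at hda hdb hxeq
    have hlab : x.length = a.length + 2 + b.length := by
      rw [hxeq]; simp; omega
    have hta : x.take (a.length + 1) = a ++ [false] := by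
      rw [hxeq, List.append_assoc, List.take_length_add_append]
      rfl
    have hP : (x.take (a.length + 1)).count true < (x.take (a.length + 1)).count false := by
      rw [hta]
      simp [List.count_append]
      have := hda.1
      omega
    have ham : a.length + 1 = m := (hmem _ (by omega)).mp hP
    have ha : a = x.take (m - 1) := by
      rw [hxeq, show m - 1 = a.length by omega, List.append_assoc, List.take_left]
    have hb : b = x.drop (m + 1) := by
      have : a ++ ([false, true] ++ b) = x.take (m - 1) ++ ([false, true] ++ x.drop (m + 1)) := by
        rw [← List.append_assoc, ← hxeq, ← List.append_assoc, ← hdec]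
      rw [ha] at this
      have := List.append_cancel_left this
      exact List.append_cancel_left this
    simp [ha, hb]
end

section
/- The map sending a Dyck word x with canonical decomposition x = 1u0v to u01v is a bijection from D_n to D_n^-. -/
namespace Stmt5Aux

lemma count_add_count (x : List Bool) : x.count true + x.count false = x.length := by
  induction x with
  | nil => simp
  | cons a l ih => cases a <;> simp [List.count_cons] <;> omega

/-- A nonempty Dyck word decomposes canonically as `1u0v` with `u, v` Dyck. -/
lemma dyck_decomp {x : List Bool} (h : isDyck x) (hx : x ≠ []) :
    ∃ u v, isDyck u ∧ isDyck v ∧ x = [true] ++ u ++ [false] ++ v := by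
  classical
  obtain ⟨h1, h2⟩ := h
  have hex : ∃ k, 0 < k ∧ (x.take k).count true = (x.take k).count false :=
    ⟨x.length, List.length_pos_iff.mpr hx, by rw [List.take_length]; exact h1⟩
  set k := Nat.find hex with hkdef
  obtain ⟨hk0, hkbal⟩ := Nat.find_spec hex
  rw [← hkdef] at hk0 hkbal
  have hmin : ∀ j, 0 < j → j < k →
      (x.take j).count false < (x.take j).count true := by
    intro j hj0 hjk
    have hnot := Nat.find_min hex hjk
    push_neg at hnot
    have h2j := h2 j
    rcases lt_or_eq_of_le h2j with h | h
    · exact h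
    · exact absurd h.symm (hnot hj0)
  have hkle : k ≤ x.length :=
    Nat.find_min' hex ⟨List.length_pos_iff.mpr hx, by rw [List.take_length]; exact h1⟩
  obtain ⟨a, t, rfl⟩ := List.exists_cons_of_ne_nil hx
  have ha : a = true := by
    cases a
    · have := h2 1
      simp at this
    · rfl
  subst ha
  have hk2 : 2 ≤ k := by
    by_contra hlt
    have hk1 : k = 1 := by omega
    rw [hk1] at hkbal
    simp at hkbal
  obtain ⟨m, hm⟩ : ∃ m, k = m + 2 := ⟨k - 2, by omega⟩
  rw [hm] at hkbal
  have hmt : m + 1 ≤ t.length := by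
    have hl : (true :: t).length = t.length + 1 := rfl
    omega
  have hm1 : m < t.length := by omega
  -- balance at m+2, in terms of t
  have hkbal' : (t.take (m + 1)).count true + 1 = (t.take (m + 1)).count false := by
    rw [(List.take_succ_cons : (true :: t).take (m + 1 + 1) = true :: t.take (m + 1))] at hkbal
    simp only [List.count_cons] at hkbal
    simp at hkbal
    omega
  -- strictness at m+1, in terms of t
  have hstrict : (t.take m).count false ≤ (t.take m).count true := by
    have h' := hmin (m + 1) (by omega) (by omega)
    rw [(List.take_succ_cons : (true :: t).take (m + 1) = true :: t.take m)] at h'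
    simp only [List.count_cons] at h'
    simp at h'
    omega
  have hstep : t.take (m + 1) = t.take m ++ [t[m]'hm1] := by
    rw [List.take_succ, List.getElem?_eq_getElem hm1]
    simp
  have hcf : t[m]'hm1 = false := by
    cases hcc : t[m]'hm1
    · rfl
    · exfalso
      rw [hstep, hcc] at hkbal'
      simp only [List.count_append, List.count_cons, List.count_nil] at hkbal'
      simp at hkbal'
      omega
  rw [hcf] at hstep
  -- balance of u
  have hbalu : (t.take m).count true = (t.take m).count false := by
    rw [hstep] at hkbal'
    simp only [List.count_append, List.count_cons, List.count_nil] at hkbal'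
    simp at hkbal'
    omega
  have hxeq : true :: t = [true] ++ t.take m ++ [false] ++ t.drop (m + 1) := by
    conv_lhs => rw [← List.take_append_drop (m + 1) t]
    rw [hstep]
    simp
  refine ⟨t.take m, t.drop (m + 1), ⟨hbalu, ?_⟩, ⟨?_, ?_⟩, hxeq⟩
  · -- u prefixes
    intro j
    rw [List.take_take]
    have hj := hmin (min j m + 1) (by omega) (by omega)
    rw [(List.take_succ_cons : (true :: t).take (min j m + 1) = true :: t.take (min j m))] at hj
    simp only [List.count_cons] at hj
    simp at hj
    omega
  · -- v balance
    have hsplit : ∀ b, t.count b = (t.take (m + 1)).count b + (t.drop (m + 1)).count b := by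
      intro b
      conv_lhs => rw [← List.take_append_drop (m + 1) t]
      rw [List.count_append]
    have hT := hsplit true
    have hF := hsplit false
    rw [hstep] at hT hF
    simp only [List.count_append, List.count_cons, List.count_nil] at hT hF
    simp at hT hF
    have h1' : t.count true + 1 = t.count false := by
      simp only [List.count_cons] at h1
      simp at h1
      omega
    omega
  · -- v prefixes
    intro j
    have h' := h2 (m + 2 + j)
    rw [show m + 2 + j = (m + 1 + j) + 1 by omega,
      (List.take_succ_cons : (true :: t).take (m + 1 + j + 1) = true :: t.take (m + 1 + j)),
      List.take_add, hstep] at h'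
    simp only [List.count_cons, List.count_append, List.count_nil] at h'
    simp at h'
    omega

/-- `u01v` with `u, v` Dyck and right length is in `D_n^-`. -/
lemma mem_minus {u v : List Bool} (hu : isDyck u) (hv : isDyck v) {n : ℕ}
    (hlen : u.length + v.length + 2 = 2 * n) :
    (u ++ [false, true] ++ v) ∈ dyckWordsMinus n := by
  obtain ⟨hu1, hu2⟩ := hu
  obtain ⟨hv1, hv2⟩ := hv
  have hul := count_add_count u
  have hvl := count_add_count v
  simp only [dyckWordsMinus, Set.mem_setOf_eq]
  refine ⟨by simp; omega, by simp [List.count_append]; omega, ?_⟩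
  have hfil : (Finset.range (2 * n + 1)).filter
      (fun k => ((u ++ [false, true] ++ v).take k).count true
        < ((u ++ [false, true] ++ v).take k).count false) = {u.length + 1} := by
    ext k
    simp only [Finset.mem_filter, Finset.mem_range, Finset.mem_singleton]
    constructor
    · rintro ⟨hk, hbad⟩
      by_contra hne
      rcases lt_or_gt_of_ne hne with hlt | hgt
      · -- k ≤ u.length
        rw [List.take_append_of_le_length
            (by simp only [List.length_append]; simp; omega),
          List.take_append_of_le_length (by omega)] at hbad
        have := hu2 k
        omega
      · -- k ≥ u.length + 2
        obtain ⟨j, rfl⟩ : ∃ j, k = u.length + (j + 2) := ⟨k - u.length - 2, by omega⟩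
        rw [List.append_assoc, List.take_length_add_append] at hbad
        have h2 : ([false, true] ++ v).take (j + 2) = false :: true :: v.take j := by
          cases j <;> simp [List.take_succ_cons]
        rw [h2] at hbad
        simp only [List.count_append, List.count_cons] at hbad
        simp at hbad
        have := hv2 j
        omega
    · rintro rfl
      refine ⟨by omega, ?_⟩
      have h3 : (u ++ [false, true] ++ v).take (u.length + 1) = u ++ [false] := by
        rw [List.append_assoc, List.take_append]
        simp
      rw [h3]
      simp only [List.count_append]
      simp
      omega
  rw [hfil]
  simp

/-- Uniqueness of the `u01v` form with `u, v` Dyck. -/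
lemma decomp_unique {u1 v1 u2 v2 : List Bool} (hu1 : isDyck u1) (hu2 : isDyck u2)
    (h : u1 ++ [false, true] ++ v1 = u2 ++ [false, true] ++ v2) :
    u1 = u2 ∧ v1 = v2 := by
  have key : ∀ (a1 b1 a2 b2 : List Bool), isDyck a1 → isDyck a2 →
      a1 ++ [false, true] ++ b1 = a2 ++ [false, true] ++ b2 →
      ¬ a1.length < a2.length := by
    intro a1 b1 a2 b2 ha1 ha2 he hlt
    have h3 : (a1 ++ [false, true] ++ b1).take (a1.length + 1) = a1 ++ [false] := by
      rw [List.append_assoc, List.take_append]; simp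
    have h4 : (a2 ++ [false, true] ++ b2).take (a1.length + 1) = a2.take (a1.length + 1) := by
      rw [List.take_append_of_le_length (by simp; omega),
        List.take_append_of_le_length (by omega)]
    rw [he, h4] at h3
    have := ha2.2 (a1.length + 1)
    rw [h3] at this
    simp only [List.count_append] at this
    simp at this
    have hb1 := ha1.1
    omega
  have hl : u1.length = u2.length := by
    rcases Nat.lt_trichotomy u1.length u2.length with h' | h' | h'
    · exact absurd h' (key u1 v1 u2 v2 hu1 hu2 h)
    · exact h'
    · exact absurd h' (key u2 v2 u1 v1 hu2 hu1 h.symm)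
  have hu : u1 = u2 := by
    have := congrArg (List.take u1.length) h
    rwa [List.take_append_of_le_length (by simp),
      List.take_append_of_le_length le_rfl,
      List.take_append_of_le_length (by simp; omega),
      List.take_append_of_le_length (le_of_eq hl),
      List.take_length, hl, List.take_length] at this
  refine ⟨hu, ?_⟩
  rw [hu] at h
  exact List.append_cancel_left h

/-- Every element of `D_n^-` has the form `u01v` with `u, v` Dyck. -/
lemma minus_decomp {y : List Bool} {n : ℕ} (hn : 1 ≤ n) (hy : y ∈ dyckWordsMinus n) :
    ∃ u v, isDyck u ∧ isDyck v ∧ y = u ++ [false, true] ++ v := by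
  obtain ⟨hlen, hct, hcard⟩ := hy
  have hcf : y.count false = n := by
    have := count_add_count y
    omega
  obtain ⟨k, hk⟩ := Finset.card_eq_one.mp hcard
  have hmem : ∀ j, (j < 2 * n + 1 ∧
      (y.take j).count true < (y.take j).count false) ↔ j = k := by
    intro j
    have := Finset.ext_iff.mp hk j
    simpa [Finset.mem_filter, Finset.mem_range] using this
  have hbadk : k < 2 * n + 1 ∧ (y.take k).count true < (y.take k).count false :=
    (hmem k).mpr rfl
  have hk1 : 1 ≤ k := by
    by_contra h0
    have hk0 : k = 0 := by omega
    rw [hk0] at hbadk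
    simp at hbadk
  have hk2n : k ≤ 2 * n - 1 := by
    by_contra hgt
    have : k = 2 * n := by omega
    rw [this] at hbadk
    rw [List.take_of_length_le (le_of_eq hlen)] at hbadk
    omega
  obtain ⟨m, rfl⟩ : ∃ m, k = m + 1 := ⟨k - 1, by omega⟩
  have hgood : ∀ j, j ≤ 2 * n → j ≠ m + 1 →
      (y.take j).count false ≤ (y.take j).count true := by
    intro j hj hne
    by_contra hbad
    exact hne ((hmem j).mp ⟨by omega, by omega⟩)
  have hm1 : m < y.length := by omega
  have hm2 : m + 1 < y.length := by omega
  -- step m → m+1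
  have hstep1 : y.take (m + 1) = y.take m ++ [y[m]'hm1] := by
    rw [List.take_succ, List.getElem?_eq_getElem hm1]; simp
  have hstep2 : y.take (m + 2) = y.take (m + 1) ++ [y[m + 1]'hm2] := by
    rw [List.take_succ, List.getElem?_eq_getElem hm2]; simp
  have hgm := hgood m (by omega) (by omega)
  have hgm2 := hgood (m + 2) (by omega) (by omega)
  have helem1 : y[m]'hm1 = false := by
    cases hcc : y[m]'hm1
    · rfl
    · exfalso
      rw [hstep1, hcc] at hbadk
      simp only [List.count_append, List.count_cons, List.count_nil] at hbadk
      simp at hbadk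
      omega
  have helem2 : y[m + 1]'hm2 = true := by
    cases hcc : y[m + 1]'hm2
    · exfalso
      rw [hstep2, hcc] at hgm2
      simp only [List.count_append, List.count_cons, List.count_nil] at hgm2
      simp at hgm2
      omega
    · rfl
  rw [helem1] at hstep1
  rw [helem2] at hstep2
  -- balance at m and at m+2
  have hbalm : (y.take m).count true = (y.take m).count false := by
    rw [hstep1] at hbadk
    simp only [List.count_append] at hbadk
    simp at hbadk
    omega
  have hbalm2 : (y.take (m + 2)).count true = (y.take (m + 2)).count false := by
    rw [hstep2, hstep1]
    simp only [List.count_append, List.count_cons, List.count_nil]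
    simp
    omega
  refine ⟨y.take m, y.drop (m + 2), ⟨hbalm, ?_⟩, ⟨?_, ?_⟩, ?_⟩
  · -- u prefixes
    intro j
    rw [List.take_take]
    exact hgood (min j m) (by omega) (by omega)
  · -- v balance
    have hcnt : ∀ b, y.count b =
        (y.take (m + 2)).count b + (y.drop (m + 2)).count b := by
      intro b
      conv_lhs => rw [← List.take_append_drop (m + 2) y]
      rw [List.count_append]
    have hT := hcnt true
    have hF := hcnt false
    omega
  · -- v prefixes
    intro j
    have hdl : (y.drop (m + 2)).length = 2 * n - (m + 2) := by
      rw [List.length_drop, hlen]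
    have htk : (y.drop (m + 2)).take j = (y.drop (m + 2)).take (min j (2 * n - (m + 2))) := by
      rw [List.take_eq_take_iff]
      omega
    rw [htk]
    have hsplit : y.take (m + 2 + min j (2 * n - (m + 2))) =
        y.take (m + 2) ++ (y.drop (m + 2)).take (min j (2 * n - (m + 2))) :=
      List.take_add (l := y) (i := m + 2)
    have hg := hgood (m + 2 + min j (2 * n - (m + 2))) (by omega) (by omega)
    rw [hsplit, List.count_append, List.count_append] at hg
    omega
  · -- structure
    conv_lhs => rw [← List.take_append_drop (m + 2) y]
    rw [hstep2, hstep1]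
    simp

lemma isDyck_nest {u v : List Bool} (hu : isDyck u) (hv : isDyck v) :
    isDyck ([true] ++ u ++ [false] ++ v) := by
  obtain ⟨hu1, hu2⟩ := hu
  obtain ⟨hv1, hv2⟩ := hv
  have hx : [true] ++ u ++ [false] ++ v = true :: (u ++ ([false] ++ v)) := by simp
  rw [hx]
  constructor
  · simp only [List.count_cons, List.count_append]
    simp
    omega
  · intro k
    match k with
    | 0 => simp
    | (m + 1) =>
      rw [List.take_succ_cons, List.take_append]
      rcases Nat.lt_or_ge m (u.length + 1) with h | h
      · have h0 : m - u.length = 0 := by omega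
        rw [h0]
        simp only [List.take_zero, List.append_nil, List.count_cons]
        have := hu2 m
        simp
        omega
      · obtain ⟨j, hj⟩ : ∃ j, m - u.length = j + 1 := ⟨m - u.length - 1, by omega⟩
        rw [hj, List.take_of_length_le (by omega)]
        have h5 : ([false] ++ v).take (j + 1) = false :: v.take j := List.take_succ_cons
        rw [h5]
        simp only [List.count_cons, List.count_append]
        have := hv2 j
        simp
        omega

end Stmt5Aux

open Stmt5Aux in
/-- The map sending a Dyck word with canonical decomposition `1u0v` to `u01v` is a
bijection from `D_n` onto `D_n^-`. -/
theorem stmt_5 (n : ℕ) (hn : 1 ≤ n) (f : List Bool → List Bool)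
    (hf : ∀ u v : List Bool, isDyck u → isDyck v →
      f ([true] ++ u ++ [false] ++ v) = u ++ [false, true] ++ v) :
    Set.BijOn f (dyckWords n) (dyckWordsMinus n) := by
  refine ⟨?_, ?_, ?_⟩
  · -- MapsTo
    intro x hx
    obtain ⟨hlen, hd⟩ := hx
    have hne : x ≠ [] := by
      intro h
      rw [h] at hlen
      simp at hlen
      omega
    obtain ⟨u, v, hu, hv, hxe⟩ := dyck_decomp hd hne
    rw [hxe, hf u v hu hv]
    apply mem_minus hu hv
    have := congrArg List.length hxe
    rw [hlen] at this
    simp at this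
    omega
  · -- InjOn
    intro x1 h1 x2 h2 hfe
    obtain ⟨hlen1, hd1⟩ := h1
    obtain ⟨hlen2, hd2⟩ := h2
    have hne1 : x1 ≠ [] := by
      intro h; rw [h] at hlen1; simp at hlen1; omega
    have hne2 : x2 ≠ [] := by
      intro h; rw [h] at hlen2; simp at hlen2; omega
    obtain ⟨u1, v1, hu1, hv1, he1⟩ := dyck_decomp hd1 hne1
    obtain ⟨u2, v2, hu2, hv2, he2⟩ := dyck_decomp hd2 hne2
    rw [he1, hf u1 v1 hu1 hv1, he2, hf u2 v2 hu2 hv2] at hfe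
    obtain ⟨hue, hve⟩ := decomp_unique hu1 hu2 hfe
    rw [he1, he2, hue, hve]
  · -- SurjOn
    intro y hy
    obtain ⟨u, v, hu, hv, hye⟩ := minus_decomp hn hy
    refine ⟨[true] ++ u ++ [false] ++ v, ⟨?_, isDyck_nest hu hv⟩, ?_⟩
    · have := congrArg List.length hye
      obtain ⟨hl, _, _⟩ := hy
      rw [hl] at this
      simp at this ⊢
      omega
    · rw [hf u v hu hv, ← hye]
end

section
/- The tree rotation operation ρ on D_n given by ρ(1u0v) = u1v0 is a bijection from D_n to D_n. -/
namespace Stmt8Aux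

lemma count_tf (x : List Bool) : x.count true + x.count false = x.length := by
  induction x with
  | nil => rfl
  | cons a t ih => cases a <;> simp [List.count_cons] <;> omega

lemma count_take_succ (x : List Bool) (b : Bool) (k : ℕ) (hk : k < x.length) :
    (x.take (k+1)).count b = (x.take k).count b + if x[k] = b then 1 else 0 := by
  rw [List.take_succ, List.getElem?_eq_getElem hk, List.count_append]
  congr 1
  by_cases h : x[k] = b <;> simp [h, List.count_singleton']

lemma count_take_add (x : List Bool) (b : Bool) (j k : ℕ) :
    (x.take (j+k)).count b = (x.take j).count b + ((x.drop j).take k).count b := by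
  rw [List.take_add, List.count_append]

/-- `1u0v` is a Dyck word when `u, v` are. -/
lemma mk1 {u v : List Bool} (hu : isDyck u) (hv : isDyck v) :
    isDyck ([true] ++ u ++ [false] ++ v) := by
  have e : [true] ++ u ++ [false] ++ v = true :: (u ++ false :: v) := by simp
  rw [e]
  constructor
  · have h1 := hu.1
    have h2 := hv.1
    simp [List.count_append, List.count_cons]
    omega
  · intro k
    cases k with
    | zero => simp
    | succ k =>
      rw [List.take_succ_cons, List.take_append]
      rcases le_or_gt k u.length with h | h
      · have h0 : k - u.length = 0 := by omega
        rw [h0]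
        have := hu.2 k
        simp [List.count_cons, List.count_append]
        omega
      · have h1 : u.take k = u := List.take_of_length_le (le_of_lt h)
        have h2 : k - u.length = (k - u.length - 1) + 1 := by omega
        rw [h1, h2, List.take_succ_cons]
        have := hv.2 (k - u.length - 1)
        have hu1 := hu.1
        simp [List.count_cons, List.count_append]
        omega

/-- `u1v0` is a Dyck word when `u, v` are. -/
lemma mk2 {u v : List Bool} (hu : isDyck u) (hv : isDyck v) :
    isDyck (u ++ [true] ++ v ++ [false]) := by
  have e : u ++ [true] ++ v ++ [false] = u ++ true :: (v ++ [false]) := by simp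
  rw [e]
  constructor
  · have h1 := hu.1
    have h2 := hv.1
    simp [List.count_append, List.count_cons]
    omega
  · intro k
    rw [List.take_append]
    rcases le_or_gt k u.length with h | h
    · have h0 : k - u.length = 0 := by omega
      rw [h0]
      have := hu.2 k
      simpa using this
    · have h1 : u.take k = u := List.take_of_length_le (le_of_lt h)
      have h2 : k - u.length = (k - u.length - 1) + 1 := by omega
      rw [h1, h2, List.take_succ_cons, List.take_append]
      have := hv.2 (k - u.length - 1)
      have hu1 := hu.1
      have hle : ((List.take (k - u.length - 1 - v.length) [false]).count false ≤ 1) ∧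
          ((List.take (k - u.length - 1 - v.length) [false]).count true = 0) := by
        rcases Nat.eq_zero_or_pos (k - u.length - 1 - v.length) with h3 | h3
        · simp [h3]
        · have : (k - u.length - 1 - v.length) = (k - u.length - 1 - v.length - 1) + 1 := by omega
          rw [this, List.take_succ_cons]
          simp
      simp [List.count_cons, List.count_append]
      omega

/-- Canonical decomposition: every nonempty Dyck word is `1u0v`. -/
lemma exists_decomp1 {x : List Bool} (hx : isDyck x) (hne : x ≠ []) :
    ∃ u v, isDyck u ∧ isDyck v ∧ x = [true] ++ u ++ [false] ++ v := by
  have hlpos : 0 < x.length := List.length_pos_iff.mpr hne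
  set P : ℕ → Prop := fun k => (x.take k).count false = (x.take k).count true ∧ 1 ≤ k with hP
  have hdec : DecidablePred P := fun k => by unfold P; infer_instance
  have hPlen : P x.length := by
    simp only [hP, List.take_length]
    exact ⟨hx.1.symm, hlpos⟩
  have hex : ∃ k, P k := ⟨x.length, hPlen⟩
  set m := Nat.find hex with hm
  have hPm : P m := Nat.find_spec hex
  have hmle : m ≤ x.length := Nat.find_le hPlen
  have hmin : ∀ k, 1 ≤ k → k < m → (x.take k).count false < (x.take k).count true := by
    intro k hk1 hkm
    have := Nat.find_min hex hkm
    have h2 := hx.2 k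
    unfold P at this
    omega
  have h0 : x[0] = true := by
    by_contra h
    have hb : x[0] = false := by revert h; cases x[0] <;> simp
    have := hx.2 1
    have h1 := count_take_succ x false 0 hlpos
    have h2 := count_take_succ x true 0 hlpos
    rw [hb] at h1 h2
    simp at h1 h2 this
    omega
  have hm2 : 2 ≤ m := by
    rcases Nat.lt_or_ge m 2 with h | h
    · exfalso
      have hm1 : m = 1 := by omega
      have h1 := count_take_succ x false 0 hlpos
      have h2 := count_take_succ x true 0 hlpos
      rw [h0] at h1 h2
      simp at h1 h2
      have := hPm.1
      rw [hm1] at this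
      omega
    · exact h
  have hm1lt : m - 1 < x.length := by omega
  have hstep0 := count_take_succ x false (m-1) hm1lt
  have hstep1 := count_take_succ x true (m-1) hm1lt
  have hmm : m - 1 + 1 = m := by omega
  rw [hmm] at hstep0 hstep1
  have hstrict : (x.take (m-1)).count false < (x.take (m-1)).count true :=
    hmin (m-1) (by omega) (by omega)
  have hlast : x[m-1] = false := by
    by_contra h
    have hb : x[m-1] = true := by revert h; cases x[m-1] <;> simp
    rw [hb] at hstep0 hstep1
    simp at hstep0 hstep1
    have := hPm.1
    omega
  rw [hlast] at hstep0 hstep1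
  simp at hstep0 hstep1
  -- counts at m-1: c0 + 1 = c1
  have hkey : (x.take (m-1)).count false + 1 = (x.take (m-1)).count true := by
    have := hPm.1; omega
  refine ⟨(x.drop 1).take (m-2), x.drop m, ?_, ?_, ?_⟩
  · -- u is Dyck
    have c01 : ([true] : List Bool).count false = 0 := by decide
    have c11 : ([true] : List Bool).count true = 1 := by decide
    have hcnt : ∀ b, (x.take (m-1)).count b = (x.take 1).count b + ((x.drop 1).take (m-2)).count b := by
      intro b
      have := count_take_add x b 1 (m-2)
      rwa [show 1 + (m-2) = m - 1 by omega] at this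
    have ht1 : x.take 1 = [true] := by
      rw [show (1:ℕ) = 0 + 1 from rfl, List.take_succ, List.getElem?_eq_getElem hlpos, h0]
      simp
    have hc0 := hcnt false
    have hc1 := hcnt true
    rw [ht1, c01] at hc0
    rw [ht1, c11] at hc1
    constructor
    · omega
    · intro j
      rcases le_or_gt j (m-2) with hj | hj
      · have htk : ((x.drop 1).take (m-2)).take j = (x.drop 1).take j := by
          rw [List.take_take, min_eq_left hj]
        rw [htk]
        have hd0 := count_take_add x false 1 j
        have hd1 := count_take_add x true 1 j
        rw [ht1, c01] at hd0
        rw [ht1, c11] at hd1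
        have hs := hmin (1+j) (by omega) (by omega)
        omega
      · have hlen : ((x.drop 1).take (m-2)).length ≤ m - 2 := by
          simp
        rw [List.take_of_length_le (le_trans hlen (le_of_lt hj))]
        omega
  · -- v is Dyck
    have hcnt : ∀ b j, (x.take (m+j)).count b = (x.take m).count b + ((x.drop m).take j).count b :=
      fun b j => count_take_add x b m j
    have hvfull : ∀ b, x.count b = (x.take m).count b + (x.drop m).count b := by
      intro b
      conv_lhs => rw [← List.take_append_drop m x]
      rw [List.count_append]
    constructor
    · have h1 := hvfull true
      have h2 := hvfull false
      have := hx.1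
      have := hPm.1
      omega
    · intro j
      rcases le_or_gt j (x.drop m).length with hj | hj
      · have hc0 := hcnt false j
        have hc1 := hcnt true j
        have := hx.2 (m+j)
        have := hPm.1
        omega
      · rw [List.take_of_length_le (le_of_lt hj)]
        have h1 := hvfull true
        have h2 := hvfull false
        have := hx.1
        have := hPm.1
        omega
  · -- the equation
    have e1 : x = x.take 1 ++ x.drop 1 := (List.take_append_drop 1 x).symm
    have ht1 : x.take 1 = [true] := by
      rw [show (1:ℕ) = 0 + 1 from rfl, List.take_succ, List.getElem?_eq_getElem hlpos, h0]
      simp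
    have e2 : x.drop 1 = (x.drop 1).take (m-2) ++ (x.drop 1).drop (m-2) :=
      (List.take_append_drop _ _).symm
    have e3 : (x.drop 1).drop (m-2) = x.drop (m-1) := by
      rw [List.drop_drop, show 1 + (m-2) = m-1 by omega]
    have e4 : x.drop (m-1) = false :: x.drop m := by
      rw [List.drop_eq_getElem_cons hm1lt, hlast, hmm]
    conv_lhs => rw [e1, ht1, e2, e3, e4]
    simp

/-- Reverse decomposition: every nonempty Dyck word is `u1v0`. -/
lemma exists_decomp2 {x : List Bool} (hx : isDyck x) (hne : x ≠ []) :
    ∃ u v, isDyck u ∧ isDyck v ∧ x = u ++ [true] ++ v ++ [false] := by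
  have hlpos : 0 < x.length := List.length_pos_iff.mpr hne
  have hlen2 : 2 ≤ x.length := by
    have := count_tf x
    have := hx.1
    omega
  set L := x.length with hL
  set P : ℕ → Prop := fun k => (x.take k).count false = (x.take k).count true with hP
  have hdec : DecidablePred P := fun k => by unfold P; infer_instance
  set m := Nat.findGreatest P (L-1) with hm
  have hPm : P m := Nat.findGreatest_spec (Nat.zero_le _) (by unfold P; simp)
  have hmle : m ≤ L - 1 := Nat.findGreatest_le _
  have hnot : ∀ k, m < k → k ≤ L - 1 → ¬ P k := fun k h1 h2 => Nat.findGreatest_is_greatest h1 h2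
  have hstrict : ∀ k, m < k → k ≤ L - 1 → (x.take k).count false < (x.take k).count true := by
    intro k h1 h2
    have := hnot k h1 h2
    have h3 := hx.2 k
    unfold P at this
    omega
  -- last step: counts at L-1 vs L
  have hL1lt : L - 1 < x.length := by omega
  have hsf := count_take_succ x false (L-1) hL1lt
  have hst := count_take_succ x true (L-1) hL1lt
  rw [show L - 1 + 1 = L by omega, show x.take L = x by rw [hL]; exact List.take_length] at hsf hst
  -- ¬ P (L-1), hence m < L - 1
  have hnotL1 : ¬ P (L-1) := by
    intro h
    unfold P at h
    have := hx.1
    cases hb : x[L-1] <;> rw [hb] at hsf hst <;> simp at hsf hst <;> omega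
  have hmlt : m < L - 1 := by
    rcases Nat.lt_or_ge m (L-1) with h | h
    · exact h
    · exfalso
      have hme : m = L - 1 := by omega
      rw [hme] at hPm
      exact hnotL1 hPm
  have hstrL1 : (x.take (L-1)).count false < (x.take (L-1)).count true :=
    hstrict (L-1) hmlt (le_refl _)
  have hlast : x[L-1] = false := by
    cases hb : x[L-1]
    · rfl
    · rw [hb] at hsf hst; simp at hsf hst
      have := hx.1; omega
  rw [hlast] at hsf hst
  simp at hsf hst
  -- char at m is true
  have hmlt' : m < x.length := by omega
  have hsfm := count_take_succ x false m hmlt'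
  have hstm := count_take_succ x true m hmlt'
  have hstrm1 : (x.take (m+1)).count false < (x.take (m+1)).count true :=
    hstrict (m+1) (by omega) (by omega)
  have hmc : x[m] = true := by
    cases hb : x[m]
    · rw [hb] at hsfm hstm; simp at hsfm hstm
      unfold P at hPm
      omega
    · rfl
  rw [hmc] at hsfm hstm
  simp at hsfm hstm
  unfold P at hPm
  refine ⟨x.take m, (x.drop (m+1)).take (L - m - 2), ?_, ?_, ?_⟩
  · exact ⟨by omega, fun j => by rw [List.take_take]; exact hx.2 _⟩
  · have hcnt : ∀ b j, (x.take (m+1+j)).count b = (x.take (m+1)).count b + ((x.drop (m+1)).take j).count b :=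
      fun b j => count_take_add x b (m+1) j
    have hcond : ∀ j, j ≤ L - m - 2 →
        ((x.drop (m+1)).take j).count false ≤ ((x.drop (m+1)).take j).count true := by
      intro j hj
      have hc0 := hcnt false j
      have hc1 := hcnt true j
      have hs := hstrict (m+1+j) (by omega) (by omega)
      omega
    have hveq : ∀ b, (((x.drop (m+1)).take (L-m-2)).take (L-m-2)).count b = ((x.drop (m+1)).take (L-m-2)).count b := by
      intro b
      rw [List.take_take, min_self]
    -- counts of v equal
    have hveqc : ((x.drop (m+1)).take (L-m-2)).count true = ((x.drop (m+1)).take (L-m-2)).count false := by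
      have hc0 := hcnt false (L-m-2)
      have hc1 := hcnt true (L-m-2)
      rw [show m+1+(L-m-2) = L-1 by omega] at hc0 hc1
      have hxc := hx.1
      omega
    refine ⟨hveqc, fun j => ?_⟩
    rcases le_or_gt j (L-m-2) with hj | hj
    · have htk : (((x.drop (m+1)).take (L-m-2)).take j) = (x.drop (m+1)).take j := by
        rw [List.take_take, min_eq_left hj]
      rw [htk]
      exact hcond j hj
    · have hlen : ((x.drop (m+1)).take (L-m-2)).length ≤ L-m-2 := by simp
      rw [List.take_of_length_le (le_trans hlen (le_of_lt hj))]
      omega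
  · -- equation
    have e1 : x = x.take m ++ x.drop m := (List.take_append_drop m x).symm
    have e2 : x.drop m = true :: x.drop (m+1) := by
      rw [List.drop_eq_getElem_cons hmlt', hmc]
    have e3 : x.drop (m+1) = (x.drop (m+1)).take (L-m-2) ++ (x.drop (m+1)).drop (L-m-2) :=
      (List.take_append_drop _ _).symm
    have e4 : (x.drop (m+1)).drop (L-m-2) = x.drop (L-1) := by
      rw [List.drop_drop, show m+1+(L-m-2) = L-1 by omega]
    have e5 : x.drop (L-1) = [false] := by
      rw [List.drop_eq_getElem_cons hL1lt, hlast, show L-1+1 = L by omega, hL,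
        List.drop_length]
    conv_lhs => rw [e1, e2, e3, e4, e5]
    simp

lemma no_lt1 {a b a' b' : List Bool} (ha : a.count true = a.count false)
    (ha' : ∀ k, (a'.take k).count false ≤ (a'.take k).count true)
    (h : a ++ [false] ++ b = a' ++ [false] ++ b') (hlt : a.length < a'.length) : False := by
  have h1 : ((a ++ [false]) ++ b).take (a.length + 1) = a ++ [false] := by
    rw [List.take_append_of_le_length (by simp), List.take_of_length_le (by simp)]
  have h2 : ((a' ++ [false]) ++ b').take (a.length + 1) = a'.take (a.length + 1) := by
    rw [List.take_append_of_le_length (by simp; omega), List.take_append_of_le_length (by omega)]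
  rw [h, h2] at h1
  have := ha' (a.length + 1)
  rw [h1] at this
  simp [List.count_append] at this
  omega

lemma uniq1 {u v u' v' : List Bool} (hu : isDyck u) (hu' : isDyck u')
    (h : [true] ++ u ++ [false] ++ v = [true] ++ u' ++ [false] ++ v') : u = u' ∧ v = v' := by
  have h' : u ++ [false] ++ v = u' ++ [false] ++ v' := by
    have : true :: (u ++ [false] ++ v) = true :: (u' ++ [false] ++ v') := by
      simpa using h
    simpa using this
  have hlen : u.length = u'.length := by
    rcases Nat.lt_trichotomy u.length u'.length with h1 | h1 | h1
    · exact absurd h1 (fun h1 => no_lt1 hu.1 hu'.2 h' h1)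
    · exact h1
    · exact absurd h1 (fun h1 => no_lt1 hu'.1 hu.2 h'.symm h1)
  have h'' : u ++ ([false] ++ v) = u' ++ ([false] ++ v') := by simpa using h'
  obtain ⟨e1, e2⟩ := List.append_inj h'' hlen
  exact ⟨e1, by simpa using e2⟩

lemma no_lt2 {u v u' v' : List Bool} (hu : u.count true = u.count false)
    (hu' : u'.count true = u'.count false)
    (hv : ∀ k, (v.take k).count false ≤ (v.take k).count true)
    (h : u ++ [true] ++ v = u' ++ [true] ++ v') (hlt : u.length < u'.length) : False := by
  have h2 : (u' ++ [true] ++ v').take u'.length = u' := by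
    rw [show u' ++ [true] ++ v' = u' ++ ([true] ++ v') by simp,
      List.take_append_of_le_length (le_refl _), List.take_length]
  have h1 : (u ++ [true] ++ v).take u'.length
      = u ++ [true] ++ v.take (u'.length - u.length - 1) := by
    rw [show u ++ [true] ++ v = u ++ (true :: v) by simp,
      List.take_append, List.take_of_length_le (by omega),
      show u'.length - u.length = (u'.length - u.length - 1) + 1 by omega,
      List.take_succ_cons]
    simp
  rw [h, h2] at h1
  have ct : ([true] : List Bool).count true = 1 := by decide
  have cf : ([true] : List Bool).count false = 0 := by decide
  have hc1 : u'.count true = u.count true + 1 + (v.take (u'.length - u.length - 1)).count true := by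
    conv_lhs => rw [h1, List.count_append, List.count_append, ct]
  have hc0 : u'.count false = u.count false + (v.take (u'.length - u.length - 1)).count false := by
    conv_lhs => rw [h1, List.count_append, List.count_append, cf]
    omega
  have := hv (u'.length - u.length - 1)
  omega

lemma uniq2 {u v u' v' : List Bool} (hu : isDyck u) (hv : isDyck v)
    (hu' : isDyck u') (hv' : isDyck v')
    (h : u ++ [true] ++ v ++ [false] = u' ++ [true] ++ v' ++ [false]) : u = u' ∧ v = v' := by
  have h' : u ++ [true] ++ v = u' ++ [true] ++ v' := List.append_cancel_right h
  have hlen : u.length = u'.length := by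
    rcases Nat.lt_trichotomy u.length u'.length with h1 | h1 | h1
    · exact absurd h1 (fun h1 => no_lt2 hu.1 hu'.1 hv.2 h' h1)
    · exact h1
    · exact absurd h1 (fun h1 => no_lt2 hu'.1 hu.1 hv'.2 h'.symm h1)
  have h'' : u ++ ([true] ++ v) = u' ++ ([true] ++ v') := by simpa using h'
  obtain ⟨e1, e2⟩ := List.append_inj h'' hlen
  exact ⟨e1, by simpa using e2⟩

end Stmt8Aux

open Stmt8Aux in
/-- The tree rotation `ρ(1u0v) := u1v0` is a bijection from `D_n` to `D_n`. -/
theorem stmt_8 (n : ℕ) (hn : 1 ≤ n) (f : List Bool → List Bool)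
    (hf : ∀ u v : List Bool, isDyck u → isDyck v →
      f ([true] ++ u ++ [false] ++ v) = u ++ [true] ++ v ++ [false]) :
    Set.BijOn f (dyckWords n) (dyckWords n) := by
  have hne : ∀ x ∈ dyckWords n, x ≠ [] := by
    intro x hx h
    have := hx.1
    rw [h] at this
    simp at this
    omega
  refine ⟨?_, ?_, ?_⟩
  · intro x hx
    obtain ⟨u, v, hu, hv, hxe⟩ := exists_decomp1 hx.2 (hne x hx)
    rw [hxe, hf u v hu hv]
    refine ⟨?_, mk2 hu hv⟩
    have := hx.1
    rw [hxe] at this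
    simp at this ⊢
    omega
  · intro x hx y hy hxy
    obtain ⟨u, v, hu, hv, hxe⟩ := exists_decomp1 hx.2 (hne x hx)
    obtain ⟨u', v', hu', hv', hye⟩ := exists_decomp1 hy.2 (hne y hy)
    rw [hxe, hf u v hu hv, hye, hf u' v' hu' hv'] at hxy
    obtain ⟨e1, e2⟩ := uniq2 hu hv hu' hv' hxy
    rw [hxe, hye, e1, e2]
  · intro y hy
    obtain ⟨u, v, hu, hv, hye⟩ := exists_decomp2 hy.2 (hne y hy)
    refine ⟨[true] ++ u ++ [false] ++ v, ⟨?_, mk1 hu hv⟩, ?_⟩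
    · have := hy.1
      rw [hye] at this
      simp at this ⊢
      omega
    · rw [hf u v hu hv, ← hye]
end

section
/- For a flippable pair, the map τ defined by τ(110w0v) = 101w0v maps the set T_n = {110w0v : w, v Dyck words, |w|+|v| = 2n-4} into D_n, and its image {101w0v : w, v Dyck words} is disjoint from T_n. -/
/-- `T_n ⊆ D_n` is the set of Dyck words of the form `110w0v` with `w`, `v` Dyck words. -/
def flipTreeSet (n : ℕ) : Set (List Bool) :=
  {x | ∃ w v : List Bool, isDyck w ∧ isDyck v ∧ w.length + v.length = 2 * n - 4 ∧
    x = [true, true, false] ++ w ++ [false] ++ v}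

lemma dyck_aux (w v : List Bool) (hw : isDyck w) (hv : isDyck v) (m : ℕ) :
    ((w ++ [false] ++ v).take m).count false ≤ ((w ++ [false] ++ v).take m).count true + 1 := by
  rw [List.take_append, List.take_append]
  have h1 := hw.2 m
  have h2 := hv.2 (m - (w ++ [false]).length)
  have h3 : (([false] : List Bool).take (m - w.length)).count false ≤ 1 := by
    cases h : m - w.length <;> simp
  have h4 : (([false] : List Bool).take (m - w.length)).count true = 0 := by
    cases h : m - w.length <;> simp
  simp only [List.count_append]
  omega

/-- The map `τ(110w0v) = 101w0v` maps `T_n` into `D_n`, and its image is disjoint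
from `T_n`. -/
theorem stmt_9 (n : ℕ) (hn : 2 ≤ n) (w v : List Bool)
    (hw : isDyck w) (hv : isDyck v) (hlen : w.length + v.length = 2 * n - 4) :
    ([true, false, true] ++ w ++ [false] ++ v) ∈ dyckWords n ∧
    ([true, false, true] ++ w ++ [false] ++ v) ∉ flipTreeSet n := by
  have hx : [true, false, true] ++ w ++ [false] ++ v
      = [true, false, true] ++ (w ++ [false] ++ v) := by simp
  constructor
  · refine ⟨?_, ?_, ?_⟩
    · simp only [List.length_append, List.length_cons, List.length_nil]
      omega
    · have := hw.1; have := hv.1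
      simp only [List.count_append, List.count_cons, List.count_nil]
      simp only [this]
      simp [hw.1, hv.1]
      omega
    · intro k
      match k with
      | 0 => simp
      | 1 => simp
      | 2 => simp
      | (m + 3) =>
        rw [hx]
        have : ([true, false, true] ++ (w ++ [false] ++ v)).take (m + 3)
            = [true, false, true] ++ (w ++ [false] ++ v).take m := by
          simp [List.take_append]
        rw [this]
        have := dyck_aux w v hw hv m
        simp only [List.count_append]
        simp
        simp at this
        omega
  · rintro ⟨w', v', _, _, _, heq⟩
    have h2 : ([true, false, true] ++ w ++ [false] ++ v)[1]?
        = ([true, true, false] ++ w' ++ [false] ++ v')[1]? := by rw [heq]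
    simp at h2
end
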